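/- Let γ : ℝ/ℤ → ℝ³ be an arclength parametrization of a closed Lipschitz curve Γ of length 1 with κ*(s) := 1/r(s), where r(s) is the security radius. Then there exists an absolute constant C (one may take C = 8) such that for every point x ∈ ℝ³ and every radius ρ > 0, the one-dimensional Lebesgue measure of { s ∈ ℝ/ℤ : |γ(s) − x| < ρ } is at most C ρ ‖κ*‖_{L^{1,∞}}, where ‖κ*‖_{L^{1,∞}} = sup_{σ>0} σ |{ s : κ*(s) ≥ σ }| is the weak-L¹ norm. -/

import Mathlib

open MeasureTheory
open scoped ENNReal NNReal

noncomputable section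

abbrev E3 := EuclideanSpace ℝ (Fin 3)

/-- Distance modulo `L·ℤ` of a real number from `0`. -/
def pdist (L a : ℝ) : ℝ := sInf {d : ℝ | ∃ k : ℤ, d = |a - L * k|}

/-- The security radius of a closed curve `γ` (with tangent `γd`) at parameter `s`. -/
def securityRadius (L : ℝ) (γ γd : ℝ → E3) (s : ℝ) : ℝ :=
  sSup {r : ℝ | 0 < r ∧
    (∀ h : ℝ, r ≤ pdist L h → r / 2 ≤ ‖γ (s + h) - γ s‖) ∧
    (∀ h : ℝ, pdist L h ≤ r → ‖γd (s + h) - γd s‖ ≤ pdist L h / r)}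

/-- `κ*(s) = 1/r(s)` as an extended nonnegative real (so `κ* = ∞` where `r = 0`). -/
def kstar (L : ℝ) (γ γd : ℝ → E3) (s : ℝ) : ℝ≥0∞ :=
  (ENNReal.ofReal (securityRadius L γ γd s))⁻¹

/-- The weak-`L¹` norm `‖κ*‖_{L^{1,∞}} = sup_{σ>0} σ |{s : κ*(s) ≥ σ}|` over one period. -/
def wkNorm (L : ℝ) (γ γd : ℝ → E3) : ℝ≥0∞ :=
  ⨆ σ : NNReal, (σ : ℝ≥0∞) * volume {s ∈ Set.Ico (0:ℝ) L | (σ : ℝ≥0∞) ≤ kstar L γ γd s}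

end

open intervalIntegral Filter Topology

lemma pdist_one (a : ℝ) : pdist 1 a = |a - round a| := by
  apply le_antisymm
  · apply csInf_le ⟨0, by rintro d ⟨k, rfl⟩; positivity⟩
    exact ⟨round a, by norm_num⟩
  · refine le_csInf ⟨|a - 1 * ((0:ℤ):ℝ)|, ⟨0, rfl⟩⟩ ?_
    rintro d ⟨k, rfl⟩
    simpa using round_le a k

lemma pdist_nonneg (a : ℝ) : 0 ≤ pdist 1 a := by rw [pdist_one]; positivity

lemma pdist_le_int (a : ℝ) (k : ℤ) : pdist 1 a ≤ |a - k| := by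
  rw [pdist_one]; exact round_le a k

lemma pdist_le_abs (a : ℝ) : pdist 1 a ≤ |a| := by simpa using pdist_le_int a 0

lemma pdist_le_half (a : ℝ) : pdist 1 a ≤ 1 / 2 := by rw [pdist_one]; exact abs_sub_round a

/-- FTC for Lipschitz functions with a.e. derivative. -/
lemma lipschitz_ftc {φ φd : ℝ → ℝ} {K : ℝ≥0} (hφ : LipschitzWith K φ)
    (hd : ∀ᵐ u, HasDerivAt φ (φd u) u) (a b : ℝ) :
    ∫ u in a..b, φd u = φ b - φ a := by
  have hcont : Continuous φ := hφ.continuous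
  -- φd is a.e. strongly measurable and bounded
  have hae : φd =ᵐ[volume] deriv φ := hd.mono fun u hu => (hu.deriv).symm
  have hmeas : AEStronglyMeasurable φd (volume : Measure ℝ) :=
    (stronglyMeasurable_deriv φ).aestronglyMeasurable.congr hae.symm
  have hbound : ∀ᵐ u, ‖φd u‖ ≤ K := by
    filter_upwards [hd] with u hu
    have := hu.hasFDerivAt.le_of_lipschitz hφ
    simpa [ContinuousLinearMap.norm_smulRight_apply] using this
  have hint : ∀ c d : ℝ, IntervalIntegrable φd volume c d := by
    intro c d
    rw [intervalIntegrable_iff]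
    refine Integrable.mono' (integrableOn_const (C := (K:ℝ)) measure_Ioc_lt_top.ne) hmeas.restrict ?_
    exact ae_restrict_of_ae hbound
  -- difference quotients
  set ε : ℕ → ℝ := fun n => 1 / (n + 1) with hε
  have hεpos : ∀ n, 0 < ε n := fun n => by positivity
  have hεlim : Tendsto ε atTop (𝓝 0) := tendsto_one_div_add_atTop_nhds_zero_nat
  set F : ℕ → ℝ → ℝ := fun n u => (φ (u + ε n) - φ u) * (n + 1) with hF
  -- DCT
  have hDCT : Tendsto (fun n => ∫ u in a..b, F n u) atTop (𝓝 (∫ u in a..b, φd u)) := by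
    apply intervalIntegral.tendsto_integral_filter_of_dominated_convergence
      (fun _ => (K : ℝ))
    · exact Eventually.of_forall fun n =>
        (((hcont.comp (continuous_id.add continuous_const)).sub hcont).mul
          continuous_const).aestronglyMeasurable
    · refine Eventually.of_forall fun n => ?_
      refine Eventually.of_forall fun u _ => ?_
      have h1 : |φ (u + ε n) - φ u| ≤ K * ε n := by
        have := hφ.dist_le_mul (u + ε n) u
        simpa [Real.dist_eq, abs_of_pos (hεpos n)] using this
      have hpos := hεpos n
      have hinv : (n:ℝ) + 1 = (ε n)⁻¹ := by rw [hε]; norm_num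
      have h2 : ‖F n u‖ = |φ (u + ε n) - φ u| * ((n:ℝ) + 1) := by
        rw [Real.norm_eq_abs, hF, abs_mul, abs_of_nonneg (by positivity : (0:ℝ) ≤ (n:ℝ)+1)]
      rw [h2, hinv]
      calc |φ (u + ε n) - φ u| * (ε n)⁻¹ ≤ (K * ε n) * (ε n)⁻¹ :=
            mul_le_mul_of_nonneg_right h1 (by positivity)
        _ = K := by field_simp
    · exact intervalIntegrable_const
    · refine hd.mono fun u hu _ => ?_
      have hslope := hasDerivAt_iff_tendsto_slope.1 hu
      have hseq : Tendsto (fun n => u + ε n) atTop (𝓝[≠] u) := by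
        apply tendsto_nhdsWithin_of_tendsto_nhds_of_eventually_within
        · simpa using tendsto_const_nhds.add hεlim
        · exact Eventually.of_forall fun n => by
            simp only [Set.mem_compl_iff, Set.mem_singleton_iff]
            intro h; nlinarith [hεpos n, congrArg (fun x => x - u) h]
      have := hslope.comp hseq
      refine this.congr fun n => ?_
      have hne : ε n ≠ 0 := (hεpos n).ne'
      simp only [Function.comp, slope_def_field, hF]
      rw [div_eq_iff (by simpa using hne)]
      have : (n:ℝ) + 1 = (ε n)⁻¹ := by rw [hε]; norm_num
      rw [this, add_sub_cancel_left, mul_assoc, inv_mul_cancel₀ hne, mul_one]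
  -- value of the difference-quotient integrals
  have hφint : ∀ c d : ℝ, IntervalIntegrable φ volume c d := fun c d =>
    hcont.intervalIntegrable c d
  have hval : ∀ n : ℕ, ∫ u in a..b, F n u =
      ((∫ u in b..(b + ε n), φ u) - ∫ u in a..(a + ε n), φ u) * ((n:ℝ) + 1) := by
    intro n
    have h1 : ∫ u in a..b, F n u = (∫ u in a..b, (φ (u + ε n) - φ u)) * ((n:ℝ)+1) := by
      rw [← intervalIntegral.integral_mul_const]
    have h2 : ∫ u in a..b, (φ (u + ε n) - φ u) =
        (∫ u in (a + ε n)..(b + ε n), φ u) - ∫ u in a..b, φ u := by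
      have hc1 : Continuous fun u : ℝ => φ (u + ε n) :=
        hcont.comp (continuous_id.add continuous_const)
      rw [intervalIntegral.integral_sub (hc1.intervalIntegrable a b) (hφint a b)]
      congr 1
      exact intervalIntegral.integral_comp_add_right φ (ε n)
    have c1 := intervalIntegral.integral_add_adjacent_intervals (hφint a (a + ε n))
      (hφint (a + ε n) (b + ε n))
    have c2 := intervalIntegral.integral_add_adjacent_intervals (hφint a b)
      (hφint b (b + ε n))
    have key : (∫ u in (a + ε n)..(b + ε n), φ u) - ∫ u in a..b, φ u =
        (∫ u in b..(b + ε n), φ u) - ∫ u in a..(a + ε n), φ u := by linarith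
    rw [h1, h2, key]
  -- endpoint averages converge
  have hend : ∀ c : ℝ, Tendsto (fun n => (∫ u in c..(c + ε n), φ u) * ((n:ℝ)+1))
      atTop (𝓝 (φ c)) := by
    intro c
    have hΦ : HasDerivAt (fun t => ∫ u in c..t, φ u) (φ c) c :=
      intervalIntegral.integral_hasDerivAt_right (hφint c c)
        (hcont.stronglyMeasurable.stronglyMeasurableAtFilter) hcont.continuousAt
    have hslope := hasDerivAt_iff_tendsto_slope.1 hΦ
    have hseq : Tendsto (fun n => c + ε n) atTop (𝓝[≠] c) := by
      apply tendsto_nhdsWithin_of_tendsto_nhds_of_eventually_within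
      · simpa using tendsto_const_nhds.add hεlim
      · exact Eventually.of_forall fun n => by
          simp only [Set.mem_compl_iff, Set.mem_singleton_iff]
          intro h; nlinarith [hεpos n, congrArg (fun x => x - c) h]
    have := hslope.comp hseq
    refine this.congr fun n => ?_
    have hne : ε n ≠ 0 := (hεpos n).ne'
    have hinv : (n:ℝ) + 1 = (ε n)⁻¹ := by rw [hε]; norm_num
    simp only [Function.comp, slope_def_field, intervalIntegral.integral_same]
    rw [hinv]
    simp only [sub_zero, add_sub_cancel_left, div_eq_mul_inv]
  have hlim2 : Tendsto (fun n => ∫ u in a..b, F n u) atTop (𝓝 (φ b - φ a)) := by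
    have := (hend b).sub (hend a)
    refine this.congr fun n => ?_
    rw [hval n]; ring
  exact tendsto_nhds_unique hDCT hlim2

lemma ftc_inner {γ γd : ℝ → E3} (hlip : LipschitzWith 1 γ)
    (hderiv : ∀ᵐ s, HasDerivAt γ (γd s) s) (v : E3) (hv : ‖v‖ = 1) (a b : ℝ) :
    ∫ u in a..b, (inner ℝ (γd u) v : ℝ) = (inner ℝ (γ b) v : ℝ) - inner ℝ (γ a) v := by
  have hφlip : LipschitzWith 1 (fun u => (inner ℝ (γ u) v : ℝ)) := by
    apply LipschitzWith.of_dist_le_mul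
    intro s t
    have h1 : dist (inner ℝ (γ s) v : ℝ) (inner ℝ (γ t) v : ℝ) = |(inner ℝ (γ s - γ t) v : ℝ)| := by
      rw [Real.dist_eq, ← inner_sub_left]
    rw [h1]
    calc |(inner ℝ (γ s - γ t) v : ℝ)| ≤ ‖γ s - γ t‖ * ‖v‖ := abs_real_inner_le_norm _ _
      _ = dist (γ s) (γ t) := by rw [hv, mul_one, dist_eq_norm]
      _ ≤ 1 * dist s t := hlip.dist_le_mul s t
  have hφd : ∀ᵐ u, HasDerivAt (fun u => (inner ℝ (γ u) v : ℝ)) ((inner ℝ (γd u) v : ℝ)) u := by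
    filter_upwards [hderiv] with u hu
    have := hu.inner (𝕜 := ℝ) (hasDerivAt_const u v)
    simpa using this
  exact lipschitz_ftc hφlip hφd a b

lemma inner_intble {γ γd : ℝ → E3} (hderiv : ∀ᵐ s, HasDerivAt γ (γd s) s)
    (hunit : ∀ᵐ s, ‖γd s‖ = 1) (v : E3) (hv : ‖v‖ = 1) (a b : ℝ) :
    IntervalIntegrable (fun u => (inner ℝ (γd u) v : ℝ)) volume a b := by
  have hae : γd =ᵐ[volume] deriv γ := hderiv.mono fun u hu => hu.deriv.symm
  have hmeas : AEStronglyMeasurable γd (volume : Measure ℝ) :=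
    (stronglyMeasurable_deriv γ).aestronglyMeasurable.congr hae.symm
  have hm2 : AEStronglyMeasurable (fun u => (inner ℝ (γd u) v : ℝ)) (volume : Measure ℝ) :=
    hmeas.inner aestronglyMeasurable_const
  rw [intervalIntegrable_iff]
  refine Integrable.mono' (integrableOn_const (C := (1:ℝ)) measure_Ioc_lt_top.ne)
    hm2.restrict ?_
  refine ae_restrict_of_ae (hunit.mono fun u hu => ?_)
  rw [Real.norm_eq_abs]
  calc |(inner ℝ (γd u) v : ℝ)| ≤ ‖γd u‖ * ‖v‖ := abs_real_inner_le_norm _ _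
    _ = 1 := by rw [hu, hv, mul_one]

lemma inner_lb1 {γd : ℝ → E3} {s₀ r u : ℝ} (hr : 0 < r)
    (hc2 : ∀ h : ℝ, pdist 1 h ≤ r → ‖γd (s₀ + h) - γd s₀‖ ≤ pdist 1 h / r)
    (hu1 : ‖γd u‖ = 1) (hv : ‖γd s₀‖ = 1) {w : ℝ}
    (hw : pdist 1 (u - s₀) ≤ w) (hwr : w ≤ r) :
    1 - w^2/(2*r^2) ≤ (inner ℝ (γd u) (γd s₀) : ℝ) := by
  have hd0 := pdist_nonneg (u - s₀)
  have hb := hc2 (u - s₀) (le_trans hw hwr)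
  rw [add_sub_cancel] at hb
  have hb2 : ‖γd u - γd s₀‖ ≤ w / r := le_trans hb (by gcongr)
  have hsq := norm_sub_sq_real (γd u) (γd s₀)
  have h1 : ‖γd u - γd s₀‖^2 ≤ (w/r)^2 :=
    pow_le_pow_left₀ (norm_nonneg _) hb2 2
  rw [hu1, hv] at hsq
  have e2 : (w/r)^2 = w^2/r^2 := div_pow w r 2
  have e1 : w^2/(2*r^2) = (w^2/r^2)/2 := by ring
  rw [e2] at h1
  rw [e1]
  linarith

lemma inner_lb2 {γd : ℝ → E3} {s₀ r u : ℝ} (hr : 0 < r)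
    (hc2 : ∀ h : ℝ, pdist 1 h ≤ r → ‖γd (s₀ + h) - γd s₀‖ ≤ pdist 1 h / r)
    (hu1 : ‖γd u‖ = 1) (hv : ‖γd s₀‖ = 1) {w : ℝ}
    (hw : pdist 1 (u - s₀) ≤ w) :
    1 - 2*w^2/r^2 ≤ (inner ℝ (γd u) (γd s₀) : ℝ) := by
  have hw0 : 0 ≤ w := le_trans (pdist_nonneg _) hw
  rcases le_or_gt w r with hwr | hwr
  · have := inner_lb1 hr hc2 hu1 hv hw hwr
    have hB : 0 ≤ w^2/r^2 := by positivity
    have e : 2*w^2/r^2 = 4*(w^2/(2*r^2)) := by ring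
    have e1 : w^2/(2*r^2) = (w^2/r^2)/2 := by ring
    linarith
  · have h1 : |(inner ℝ (γd u) (γd s₀) : ℝ)| ≤ 1 := by
      calc |(inner ℝ (γd u) (γd s₀) : ℝ)| ≤ ‖γd u‖ * ‖γd s₀‖ := abs_real_inner_le_norm _ _
        _ = 1 := by rw [hu1, hv, mul_one]
    have h2 : 2*w^2/r^2 > 2 := by
      rw [gt_iff_lt, lt_div_iff₀ (by positivity)]
      nlinarith
    have := abs_le.1 h1
    linarith

lemma quad_integral (s₀ r a b : ℝ) (hr : 0 < r) :
    ∫ u in a..b, (1 - (u - s₀)^2/(2*r^2)) =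
      (b - a) - ((b - s₀)^3 - (a - s₀)^3)/(6*r^2) := by
  have hG : ∀ u : ℝ, HasDerivAt (fun t => t - (t - s₀)^3/(6*r^2))
      (1 - (u - s₀)^2/(2*r^2)) u := by
    intro u
    have h1 : HasDerivAt (fun t : ℝ => (t - s₀)^3) (3*(u - s₀)^2) u := by
      have := ((hasDerivAt_id u).sub_const s₀).fun_pow 3
      simpa using this
    have := (hasDerivAt_id' u).fun_sub (h1.div_const (6*r^2))
    refine this.congr_deriv ?_
    field_simp
    ring
  rw [intervalIntegral.integral_eq_sub_of_hasDerivAt (fun u _ => hG u)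
    (Continuous.intervalIntegrable (by continuity) a b)]
  ring

lemma chord_core {γ γd : ℝ → E3} (hlip : LipschitzWith 1 γ)
    (hderiv : ∀ᵐ s, HasDerivAt γ (γd s) s) (hunit : ∀ᵐ s, ‖γd s‖ = 1)
    {s₀ r : ℝ} (hr : 0 < r)
    (hc2 : ∀ h : ℝ, pdist 1 h ≤ r → ‖γd (s₀ + h) - γd s₀‖ ≤ pdist 1 h / r)
    (hv : ‖γd s₀‖ = 1) {a b : ℝ} (hab : a ≤ b) (hba : b - a ≤ r)
    (hend : s₀ = a ∨ s₀ = b) :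
    5/6 * (b - a) ≤ (inner ℝ (γ b - γ a) (γd s₀) : ℝ) := by
  have hFTC := ftc_inner hlip hderiv (γd s₀) hv a b
  have hmono : ∫ u in a..b, (1 - (u - s₀)^2/(2*r^2)) ≤
      ∫ u in a..b, (inner ℝ (γd u) (γd s₀) : ℝ) := by
    apply intervalIntegral.integral_mono_ae_restrict hab
      (Continuous.intervalIntegrable (by continuity) a b)
      (inner_intble hderiv hunit (γd s₀) hv a b)
    filter_upwards [ae_restrict_of_ae hunit, ae_restrict_mem measurableSet_Icc]
      with u hu1 huIcc
    have hwle : |u - s₀| ≤ r := by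
      rcases huIcc with ⟨h1, h2⟩
      rcases hend with he | he <;> subst he <;> rw [abs_le] <;>
        constructor <;> linarith
    have := inner_lb1 hr hc2 hu1 hv (pdist_le_abs (u - s₀)) hwle
    rw [sq_abs] at this
    exact this
  rw [quad_integral s₀ r a b hr] at hmono
  rw [hFTC, ← inner_sub_left] at hmono
  have hkey : ((b - s₀)^3 - (a - s₀)^3) = (b - a)^3 := by
    rcases hend with h | h <;> rw [h] <;> ring
  rw [hkey] at hmono
  have hd0 : 0 ≤ b - a := sub_nonneg.2 hab
  have hsq : (b - a)^2 ≤ r^2 := by nlinarith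
  have hcube : (b - a)^3 ≤ (b - a) * r^2 := by nlinarith
  have h6 : (b - a)^3/(6*r^2) ≤ (b - a)/6 := by
    rw [div_le_iff₀ (by positivity)]
    nlinarith
  linarith

lemma chord {γ γd : ℝ → E3} (hlip : LipschitzWith 1 γ)
    (hderiv : ∀ᵐ s, HasDerivAt γ (γd s) s) (hunit : ∀ᵐ s, ‖γd s‖ = 1)
    {s₀ r h : ℝ} (hr : 0 < r)
    (hc2 : ∀ t : ℝ, pdist 1 t ≤ r → ‖γd (s₀ + t) - γd s₀‖ ≤ pdist 1 t / r)
    (hv : ‖γd s₀‖ = 1) (hh : |h| ≤ r) :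
    5/6 * |h| ≤ ‖γ (s₀ + h) - γ s₀‖ := by
  rcases le_or_gt 0 h with h0 | h0
  · have := chord_core hlip hderiv hunit hr hc2 hv
      (by linarith : s₀ ≤ s₀ + h) (by rw [abs_of_nonneg h0] at hh; linarith) (Or.inl rfl)
    have h2 : (inner ℝ (γ (s₀ + h) - γ s₀) (γd s₀) : ℝ) ≤ ‖γ (s₀ + h) - γ s₀‖ := by
      calc (inner ℝ (γ (s₀ + h) - γ s₀) (γd s₀) : ℝ) ≤ ‖γ (s₀ + h) - γ s₀‖ * ‖γd s₀‖ :=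
            real_inner_le_norm _ _
        _ = ‖γ (s₀ + h) - γ s₀‖ := by rw [hv, mul_one]
    rw [abs_of_nonneg h0]
    have : s₀ + h - s₀ = h := by ring
    rw [this] at this ⊢
    linarith
  · have hba : s₀ - (s₀ + h) ≤ r := by rw [abs_of_neg h0] at hh; linarith
    have := chord_core hlip hderiv hunit hr hc2 hv
      (by linarith : s₀ + h ≤ s₀) hba (Or.inr rfl)
    have h2 : (inner ℝ (γ s₀ - γ (s₀ + h)) (γd s₀) : ℝ) ≤ ‖γ s₀ - γ (s₀ + h)‖ := by
      calc (inner ℝ (γ s₀ - γ (s₀ + h)) (γd s₀) : ℝ) ≤ ‖γ s₀ - γ (s₀ + h)‖ * ‖γd s₀‖ :=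
            real_inner_le_norm _ _
        _ = ‖γ s₀ - γ (s₀ + h)‖ := by rw [hv, mul_one]
    rw [abs_of_neg h0, norm_sub_rev]
    have he : s₀ - (s₀ + h) = -h := by ring
    rw [he] at this
    linarith

set_option maxHeartbeats 1000000 in
lemma radius_le_half {γ γd : ℝ → E3} (hper : ∀ t, γ (t + 1) = γ t)
    (hlip : LipschitzWith 1 γ) (hderiv : ∀ᵐ s, HasDerivAt γ (γd s) s)
    (hunit : ∀ᵐ s, ‖γd s‖ = 1) {s r : ℝ} (hr : 0 < r)
    (hc2 : ∀ t : ℝ, pdist 1 t ≤ r → ‖γd (s + t) - γd s‖ ≤ pdist 1 t / r)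
    (hv : ‖γd s‖ = 1) : r ≤ 1/2 := by
  by_contra hcon
  push_neg at hcon
  -- total integral is 0
  have hFTC := ftc_inner hlip hderiv (γd s) hv s (s + 1)
  rw [hper s, sub_self] at hFTC
  have hsplit := intervalIntegral.integral_add_adjacent_intervals
    (inner_intble hderiv hunit (γd s) hv s (s + 1/2))
    (inner_intble hderiv hunit (γd s) hv (s + 1/2) (s + 1))
  -- lower bound on first half
  have hquad1 : ∫ u in s..(s + 1/2), (1 - (u - s)^2/(2*(r/2)^2)) =
      1/2 - 1/(12*r^2) := by
    rw [quad_integral s (r/2) s (s + 1/2) (by positivity)]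
    field_simp
    ring
  have hI1 : 1/2 - 1/(12*r^2) ≤ ∫ u in s..(s + 1/2), (inner ℝ (γd u) (γd s) : ℝ) := by
    rw [← hquad1]
    apply intervalIntegral.integral_mono_ae_restrict (by linarith)
      (Continuous.intervalIntegrable (by continuity) _ _)
      (inner_intble hderiv hunit (γd s) hv _ _)
    filter_upwards [ae_restrict_of_ae hunit, ae_restrict_mem measurableSet_Icc]
      with u hu1 huIcc
    rcases huIcc with ⟨h1, h2⟩
    have hw : pdist 1 (u - s) ≤ u - s := by
      have := pdist_le_abs (u - s); rwa [abs_of_nonneg (by linarith)] at this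
    have := inner_lb2 hr hc2 hu1 hv hw
    have heq : 1 - 2*(u-s)^2/r^2 = 1 - (u - s)^2/(2*(r/2)^2) := by
      field_simp
    linarith [heq ▸ this]
  -- lower bound on second half
  have hI2 : 1/2 - 1/(12*r^2) ≤ ∫ u in (s + 1/2)..(s + 1), (inner ℝ (γd u) (γd s) : ℝ) := by
    have hquad2 : ∫ u in (s + 1/2)..(s + 1), (1 - (u - (s+1))^2/(2*(r/2)^2)) =
        1/2 - 1/(12*r^2) := by
      rw [quad_integral (s+1) (r/2) (s + 1/2) (s + 1) (by positivity)]
      field_simp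
      ring
    rw [← hquad2]
    apply intervalIntegral.integral_mono_ae_restrict (by linarith)
      (Continuous.intervalIntegrable (by continuity) _ _)
      (inner_intble hderiv hunit (γd s) hv _ _)
    filter_upwards [ae_restrict_of_ae hunit, ae_restrict_mem measurableSet_Icc]
      with u hu1 huIcc
    rcases huIcc with ⟨h1, h2⟩
    have hw : pdist 1 (u - s) ≤ (s + 1) - u := by
      have := pdist_le_int (u - s) 1
      have he : |u - s - ((1:ℤ):ℝ)| = (s + 1) - u := by
        rw [Int.cast_one, abs_of_nonpos (by linarith)]; ring
      rwa [he] at this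
    have := inner_lb2 hr hc2 hu1 hv hw
    have heq : 1 - 2*((s+1) - u)^2/r^2 = 1 - (u - (s+1))^2/(2*(r/2)^2) := by
      field_simp; ring
    linarith [heq ▸ this]
  rw [← hsplit] at hFTC
  have hr2 : (0:ℝ) < r^2 := by positivity
  have hle : 1 - 1/(6*r^2) ≤ 0 := by
    have e : (1:ℝ) - 1/(6*r^2) = (1/2 - 1/(12*r^2)) + (1/2 - 1/(12*r^2)) := by
      field_simp
      ring
    rw [e]; linarith
  rw [sub_nonpos, le_div_iff₀ (by positivity)] at hle
  nlinarith

lemma per_int {γ : ℝ → E3} (hper : ∀ t, γ (t + 1) = γ t) (t : ℝ) (k : ℤ) :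
    γ (t + k) = γ t := by
  have hp : Function.Periodic γ 1 := hper
  simpa using (hp.int_mul k) t

/-- for a unit-speed closed curve of length 1, the parameter-measure of points of
the curve within distance `ρ` of any `x ∈ ℝ³` is at most `8 ρ ‖κ*‖_{L^{1,∞}}`. -/
theorem stmt_3 (γ γd : ℝ → E3)
    (hper : ∀ t, γ (t + 1) = γ t)
    (hlip : LipschitzWith 1 γ)
    (hderiv : ∀ᵐ s, HasDerivAt γ (γd s) s)
    (hunit : ∀ᵐ s, ‖γd s‖ = 1)
    (x : E3) (ρ : ℝ) (hρ : 0 < ρ) :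
    volume {s ∈ Set.Ico (0:ℝ) 1 | ‖γ s - x‖ < ρ} ≤
      8 * ENNReal.ofReal ρ * wkNorm 1 γ γd := by
  classical
  set S : Set ℝ := {s ∈ Set.Ico (0:ℝ) 1 | ‖γ s - x‖ < ρ} with hS
  set G : Set ℝ := {s : ℝ | ‖γd s‖ = 1} with hGdef
  have hG : volume Gᶜ = 0 := by
    rw [ae_iff] at hunit
    simpa [hGdef, Set.compl_setOf] using hunit
  have hSG : volume (S ∩ G) = volume S := measure_inter_conull hG
  -- the defining set of the security radius
  set P : ℝ → Set ℝ := fun s => {r : ℝ | 0 < r ∧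
    (∀ h : ℝ, r ≤ pdist 1 h → r / 2 ≤ ‖γ (s + h) - γ s‖) ∧
    (∀ h : ℝ, pdist 1 h ≤ r → ‖γd (s + h) - γd s‖ ≤ pdist 1 h / r)} with hP
  have hsec : ∀ s, securityRadius 1 γ γd s = sSup (P s) := fun s => rfl
  -- κ* ≥ 2 a.e.
  have hk2 : ∀ s ∈ G, (2:ℝ≥0∞) ≤ kstar 1 γ γd s := by
    intro s hs
    have hr_half : securityRadius 1 γ γd s ≤ 1/2 := by
      rw [hsec]
      exact Real.sSup_le (fun r hr => radius_le_half hper hlip hderiv hunit hr.1 hr.2.2 hs)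
        (by norm_num)
    have h1 : ENNReal.ofReal (securityRadius 1 γ γd s) ≤ ENNReal.ofReal (1/2) :=
      ENNReal.ofReal_le_ofReal hr_half
    have h2 : ENNReal.ofReal (1/2 : ℝ) = 2⁻¹ := by
      rw [one_div, ENNReal.ofReal_inv_of_pos two_pos, ENNReal.ofReal_ofNat]
    calc (2:ℝ≥0∞) = (2⁻¹)⁻¹ := by rw [inv_inv]
      _ ≤ (ENNReal.ofReal (securityRadius 1 γ γd s))⁻¹ :=
          ENNReal.inv_le_inv.2 (le_trans h1 (le_of_eq h2))
  have hwk2 : (2:ℝ≥0∞) ≤ wkNorm 1 γ γd := by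
    have hsub : Set.Ico (0:ℝ) 1 ∩ G ⊆
        {s ∈ Set.Ico (0:ℝ) 1 | (((2:ℝ≥0)):ℝ≥0∞) ≤ kstar 1 γ γd s} := by
      rintro s ⟨hs1, hs2⟩
      exact ⟨hs1, by simpa using hk2 s hs2⟩
    have hvol : (1:ℝ≥0∞) ≤ volume {s ∈ Set.Ico (0:ℝ) 1 | (((2:ℝ≥0)):ℝ≥0∞) ≤ kstar 1 γ γd s} := by
      calc (1:ℝ≥0∞) = volume (Set.Ico (0:ℝ) 1 ∩ G) := by
            rw [measure_inter_conull hG, Real.volume_Ico]; norm_num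
        _ ≤ _ := measure_mono hsub
    calc (2:ℝ≥0∞) = ((2:ℝ≥0):ℝ≥0∞) * 1 := by norm_num
      _ ≤ ((2:ℝ≥0):ℝ≥0∞) * volume {s ∈ Set.Ico (0:ℝ) 1 | (((2:ℝ≥0)):ℝ≥0∞) ≤ kstar 1 γ γd s} :=
          mul_le_mul_right hvol _
      _ ≤ wkNorm 1 γ γd := le_iSup (fun σ : ℝ≥0 =>
          (σ : ℝ≥0∞) * volume {s ∈ Set.Ico (0:ℝ) 1 | (σ : ℝ≥0∞) ≤ kstar 1 γ γd s}) (2:ℝ≥0)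
  by_cases hcase : ∃ s₀ ∈ S ∩ G, ∃ r', r' ∈ P s₀ ∧ 4*ρ < r'
  · -- Case B : a point with large security radius
    obtain ⟨s₀, ⟨hs₀S, hs₀G⟩, r', ⟨hr'pos, hc1, hc2⟩, hr4⟩ := hcase
    set c : ℝ := 12*ρ/5 with hc
    have hsub : S ∩ G ⊆ Metric.ball (s₀ - 1) c ∪ Metric.ball s₀ c ∪ Metric.ball (s₀ + 1) c := by
      rintro s ⟨⟨hsI, hsρ⟩, _⟩
      have hd : ‖γ s - γ s₀‖ < 2*ρ := by
        have h1 : ‖γ s - γ s₀‖ ≤ ‖γ s - x‖ + ‖γ s₀ - x‖ := by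
          have := norm_sub_le (γ s - x) (γ s₀ - x)
          simpa [sub_sub_sub_cancel_right] using this
        have h2 := hs₀S.2
        linarith [hsρ]
      have hplt : pdist 1 (s - s₀) < r' := by
        by_contra hge
        push_neg at hge
        have := hc1 (s - s₀) hge
        rw [add_sub_cancel] at this
        linarith
      set k : ℤ := round (s - s₀) with hk
      set h : ℝ := s - s₀ - k with hh
      have hpd : pdist 1 (s - s₀) = |h| := pdist_one _
      have hhr : |h| ≤ r' := by rw [← hpd]; exact hplt.le
      have hγs : γ (s₀ + h) = γ s := by
        have he : s = (s₀ + h) + (k:ℝ) := by rw [hh]; ring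
        calc γ (s₀ + h) = γ ((s₀ + h) + (k:ℝ)) := (per_int hper _ k).symm
          _ = γ s := by rw [← he]
      have hchord := chord hlip hderiv hunit hr'pos hc2 hs₀G hhr
      rw [hγs] at hchord
      have hhc : |h| < c := by rw [hc]; linarith
      have hkb : k = -1 ∨ k = 0 ∨ k = 1 := by
        have hs01 : |s - s₀| < 1 := by
          rw [abs_lt]
          rcases hsI with ⟨ha, hb⟩
          rcases hs₀S.1 with ⟨hc', hd'⟩
          constructor <;> linarith
        have habs : |(k:ℝ)| < 2 := by
          have h1 : |s - s₀ - h| ≤ |s - s₀| + |h| := abs_sub _ _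
          have h2 : |h| ≤ 1/2 := by rw [hh, hk]; exact abs_sub_round _
          have h3 : (k:ℝ) = s - s₀ - h := by rw [hh]; ring
          rw [h3]
          calc |s - s₀ - h| ≤ |s - s₀| + |h| := h1
            _ < 2 := by linarith
        have h4 : |k| < 2 := by exact_mod_cast (by rwa [← Int.cast_abs] at habs : ((|k|:ℤ):ℝ) < 2)
        have h5 := abs_lt.1 h4
        omega
      have hmem : s ∈ Metric.ball (s₀ + (k:ℝ)) c := by
        rw [Metric.mem_ball, Real.dist_eq]
        have : s - (s₀ + (k:ℝ)) = h := by rw [hh]; ring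
        rw [this]; exact hhc
      rcases hkb with hke | hke | hke <;> rw [hke] at hmem
      · left; left; simpa [sub_eq_add_neg] using hmem
      · left; right; simpa using hmem
      · right; simpa using hmem
    have hvolS : volume S ≤ ENNReal.ofReal (6*c) := by
      rw [← hSG]
      calc volume (S ∩ G) ≤ volume (Metric.ball (s₀ - 1) c ∪ Metric.ball s₀ c ∪ Metric.ball (s₀ + 1) c) :=
            measure_mono hsub
        _ ≤ volume (Metric.ball (s₀ - 1) c ∪ Metric.ball s₀ c) + volume (Metric.ball (s₀ + 1) c) :=
            measure_union_le _ _
        _ ≤ volume (Metric.ball (s₀ - 1) c) + volume (Metric.ball s₀ c) + volume (Metric.ball (s₀ + 1) c) :=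
            add_le_add_left (measure_union_le _ _) _
        _ = ENNReal.ofReal (2*c) + ENNReal.ofReal (2*c) + ENNReal.ofReal (2*c) := by
            rw [Real.volume_ball, Real.volume_ball, Real.volume_ball]
        _ = ENNReal.ofReal (6*c) := by
            rw [← ENNReal.ofReal_add (by positivity) (by positivity),
              ← ENNReal.ofReal_add (by positivity) (by positivity)]
            congr 1; ring
    calc volume S ≤ ENNReal.ofReal (6*c) := hvolS
      _ ≤ ENNReal.ofReal (16*ρ) := ENNReal.ofReal_le_ofReal (by rw [hc]; linarith)
      _ = 8 * ENNReal.ofReal ρ * 2 := by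
          rw [ENNReal.ofReal_mul (by norm_num)]
          rw [show ENNReal.ofReal (16:ℝ) = 16 from by norm_num]
          ring
      _ ≤ 8 * ENNReal.ofReal ρ * wkNorm 1 γ γd := mul_le_mul_right hwk2 _
  · -- Case A : security radius ≤ 4ρ on S ∩ G
    push_neg at hcase
    set σ : ℝ≥0 := ((4*ρ).toNNReal)⁻¹ with hσ
    have h4ρ : (0:ℝ) < 4*ρ := by linarith
    have hσ0 : σ ≠ 0 := by
      rw [hσ]
      simp [Real.toNNReal_eq_zero, not_le, h4ρ]
    have hcoe : ((σ:ℝ≥0∞))⁻¹ = ENNReal.ofReal (4*ρ) := by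
      rw [hσ, ENNReal.coe_inv (by simp [Real.toNNReal_eq_zero, not_le, h4ρ]), inv_inv]
      rfl
    have hksm : ∀ s ∈ S ∩ G, (σ:ℝ≥0∞) ≤ kstar 1 γ γd s := by
      rintro s hs
      have hrle : securityRadius 1 γ γd s ≤ 4*ρ := by
        rw [hsec]
        apply Real.sSup_le _ (le_of_lt h4ρ)
        intro r hr
        exact hcase s hs r hr
      have h1 : ENNReal.ofReal (securityRadius 1 γ γd s) ≤ ENNReal.ofReal (4*ρ) :=
        ENNReal.ofReal_le_ofReal hrle
      calc (σ:ℝ≥0∞) = (ENNReal.ofReal (4*ρ))⁻¹ := by rw [← hcoe, inv_inv]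
        _ ≤ (ENNReal.ofReal (securityRadius 1 γ γd s))⁻¹ := ENNReal.inv_le_inv.2 h1
    have hsub : S ∩ G ⊆ {s ∈ Set.Ico (0:ℝ) 1 | (σ:ℝ≥0∞) ≤ kstar 1 γ γd s} :=
      fun s hs => ⟨hs.1.1, hksm s hs⟩
    have hwk : (σ:ℝ≥0∞) * volume S ≤ wkNorm 1 γ γd := by
      calc (σ:ℝ≥0∞) * volume S = (σ:ℝ≥0∞) * volume (S ∩ G) := by rw [hSG]
        _ ≤ (σ:ℝ≥0∞) * volume {s ∈ Set.Ico (0:ℝ) 1 | (σ:ℝ≥0∞) ≤ kstar 1 γ γd s} :=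
            mul_le_mul_right (measure_mono hsub) _
        _ ≤ wkNorm 1 γ γd := le_iSup (fun σ : ℝ≥0 =>
            (σ : ℝ≥0∞) * volume {s ∈ Set.Ico (0:ℝ) 1 | (σ : ℝ≥0∞) ≤ kstar 1 γ γd s}) σ
    have hfin : (σ:ℝ≥0∞) ≠ 0 := by simpa using hσ0
    calc volume S = ((σ:ℝ≥0∞))⁻¹ * ((σ:ℝ≥0∞) * volume S) := by
          rw [← mul_assoc, ENNReal.inv_mul_cancel hfin ENNReal.coe_ne_top, one_mul]
      _ ≤ ((σ:ℝ≥0∞))⁻¹ * wkNorm 1 γ γd := mul_le_mul_right hwk _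
      _ = ENNReal.ofReal (4*ρ) * wkNorm 1 γ γd := by rw [hcoe]
      _ ≤ 8 * ENNReal.ofReal ρ * wkNorm 1 γ γd := by
          apply mul_le_mul_left
          rw [ENNReal.ofReal_mul (by norm_num : (0:ℝ) ≤ 4)]
          apply mul_le_mul_left
          rw [ENNReal.ofReal_ofNat]
          norm_num
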